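/- arXiv:2008.01440 — 2 statements merged into one kernel-verified Lean document; each statement's English description precedes it below -/
import Mathlib

section
/- Define polynomials p_k by p₀(x) = 1/θ and the doubling recursion p_{2k−1}(x) = (2σ_k²/σ_{2k})·(2p_{k−1}(x) − x·p_{k−1}(x)²) for k a power of 2, where σ_k = T_k(σ). Then 1 − x·p_{2k−1}(x) = T_{2k}(σ − x/δ)/T_{2k}(σ), i.e. p_{2k−1} is the Chebyshev preconditioning polynomial of degree 2k−1. -/
open Polynomial Polynomial.Chebyshev in
lemma cheb_aux_one_le (y : ℝ) (hy : 1 ≤ y) :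
    ∀ n : ℕ, 1 ≤ (T ℝ (n : ℤ)).eval y ∧
      (T ℝ (n : ℤ)).eval y ≤ (T ℝ ((n : ℤ) + 1)).eval y := by
  intro n
  induction n with
  | zero => simp [T_zero, T_one, hy]
  | succ m ih =>
    obtain ⟨h1, h2⟩ := ih
    have key : (T ℝ ((m : ℤ) + 2)).eval y
        = 2 * y * (T ℝ ((m : ℤ) + 1)).eval y - (T ℝ (m : ℤ)).eval y := by
      rw [T_add_two]; simp
    constructor
    · push_cast
      linarith [mul_le_mul_of_nonneg_right (by linarith : (2:ℝ) ≤ 2 * y)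
        (by linarith : (0:ℝ) ≤ (T ℝ ((m : ℤ) + 1)).eval y)]
    · push_cast
      rw [show ((m : ℤ) + 1 + 1) = (m : ℤ) + 2 by ring, key]
      nlinarith

open Polynomial Polynomial.Chebyshev in
lemma cheb_T_two_mul_eval (y : ℝ) (k : ℤ) :
    (T ℝ (2 * k)).eval y = 2 * ((T ℝ k).eval y) ^ 2 - 1 := by
  have h := Polynomial.Chebyshev.T_mul_T ℝ k k
  have h2 := congrArg (Polynomial.eval y) h
  simp only [Polynomial.eval_mul, Polynomial.eval_add, Polynomial.eval_ofNat] at h2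
  rw [show k + k = 2 * k by ring, show k - k = 0 by ring, T_zero] at h2
  simp at h2
  nlinarith [h2]

/-- One doubling step: if `p_{k-1}` is the Chebyshev preconditioning polynomial
of degree `k-1` (i.e. `1 - x p_{k-1}(x) = T_k(σ - x/δ)/T_k(σ)`), then
`p_{2k-1}(x) = (2σ_k²/σ_{2k})(2p_{k-1}(x) - x p_{k-1}(x)²)` satisfies
`1 - x p_{2k-1}(x) = T_{2k}(σ - x/δ)/T_{2k}(σ)`. -/
theorem stmt_9 (α β : ℝ) (hαβ : 0 < α) (hβ : α < β)
    (θ δ σ : ℝ) (hθ : θ = (α + β) / 2) (hδ : δ = (β - α) / 2) (hσ : σ = θ / δ)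
    (k : ℕ) (hk : 1 ≤ k)
    (σk σ2k : ℝ) (hσk : σk = (Polynomial.Chebyshev.T ℝ (k : ℤ)).eval σ)
    (hσ2k : σ2k = (Polynomial.Chebyshev.T ℝ (2 * (k : ℤ))).eval σ)
    (pk1 p2k1 : ℝ → ℝ)
    (hpk1 : ∀ x, 1 - x * pk1 x =
      (Polynomial.Chebyshev.T ℝ (k : ℤ)).eval (σ - x / δ) / σk)
    (hdef : ∀ x, p2k1 x = (2 * σk ^ 2 / σ2k) * (2 * pk1 x - x * (pk1 x) ^ 2)) :
    ∀ x, 1 - x * p2k1 x =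
      (Polynomial.Chebyshev.T ℝ (2 * (k : ℤ))).eval (σ - x / δ) / σ2k := by
  have hδpos : 0 < δ := by rw [hδ]; linarith
  have hσgt : 1 < σ := by
    rw [hσ, hθ, hδ]
    rw [lt_div_iff₀ (by linarith)]
    linarith
  have hσk1 : 1 ≤ σk := by
    rw [hσk]; exact (cheb_aux_one_le σ hσgt.le k).1
  have hσkne : σk ≠ 0 := by linarith
  have hσ2kval : σ2k = 2 * σk ^ 2 - 1 := by
    rw [hσ2k, cheb_T_two_mul_eval, hσk]
  have hσ2kpos : 0 < σ2k := by rw [hσ2kval]; nlinarith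
  intro x
  have hT : (Polynomial.Chebyshev.T ℝ (k : ℤ)).eval (σ - x / δ)
      = σk * (1 - x * pk1 x) := by
    rw [hpk1 x]; field_simp
  rw [hdef x, cheb_T_two_mul_eval, hT]
  field_simp
  linarith [hσ2kval]
end

section
/- The scaled Newton polynomial sequence r₀(x) = ζ₀, r_{2^{j+1}−1}(x) = ζ_{j+1}(2r_{2^j−1}(x) − x·r_{2^j−1}(x)²), with ζ₀ = 2/(α+β), ζ₁ = 2/(1 + 2αζ₀ − (αζ₀)²), ζ_{j+1} = 2/(1 + 2ζ_j − ζ_j²) for j ≥ 1, coincides with the Chebyshev doubling sequence p_{2^j−1} defined by p₀(x) = 1/θ, p_{2k−1}(x) = (2σ_k²/σ_{2k})(2p_{k−1}(x) − x·p_{k−1}(x)²), where θ = (α+β)/2, σ = θ/δ, δ = (β−α)/2, σ_k = T_k(σ). -/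
/-- The scaled Newton polynomial sequence `r_{2^j-1}` coincides with the
Chebyshev doubling sequence `p_{2^j-1}` (here `r j`, `p j` denote the
polynomials of degree `2^j - 1`). -/
theorem stmt_12 (α β : ℝ) (hα : 0 < α) (hαβ : α < β)
    (θ δ σ : ℝ) (hθ : θ = (α + β) / 2) (hδ : δ = (β - α) / 2) (hσ : σ = θ / δ)
    (σk : ℕ → ℝ) (hσk : ∀ k, σk k = (Polynomial.Chebyshev.T ℝ (k : ℤ)).eval σ)
    (ζ : ℕ → ℝ)
    (hζ0 : ζ 0 = 2 / (α + β))
    (hζ1 : ζ 1 = 2 / (1 + 2 * (α * ζ 0) - (α * ζ 0) ^ 2))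
    (hζ : ∀ j, 1 ≤ j → ζ (j + 1) = 2 / (1 + 2 * ζ j - (ζ j) ^ 2))
    (r : ℕ → ℝ → ℝ)
    (hr0 : ∀ x, r 0 x = ζ 0)
    (hr : ∀ j x, r (j + 1) x = ζ (j + 1) * (2 * r j x - x * (r j x) ^ 2))
    (p : ℕ → ℝ → ℝ)
    (hp0 : ∀ x, p 0 x = 1 / θ)
    (hp : ∀ j x, p (j + 1) x =
      (2 * (σk (2 ^ j)) ^ 2 / σk (2 ^ (j + 1))) * (2 * p j x - x * (p j x) ^ 2)) :
    ∀ j, r j = p j := by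
  have hab : (0:ℝ) < α + β := by linarith
  have hba : (0:ℝ) < β - α := by linarith
  have hσval : σ = (α + β) / (β - α) := by
    rw [hσ, hθ, hδ]
    field_simp
  have hσ1 : 1 < σ := by
    rw [hσval]
    rw [lt_div_iff₀ hba]
    linarith
  -- the doubling recurrence for σk (2^j)
  have hdouble : ∀ j : ℕ, σk (2 ^ (j + 1)) = 2 * (σk (2 ^ j)) ^ 2 - 1 := by
    intro j
    have h2 : ((2 ^ (j + 1) : ℕ) : ℤ) = ((2 ^ j : ℕ) : ℤ) + ((2 ^ j : ℕ) : ℤ) := by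
      push_cast
      ring
    have h := congrArg (Polynomial.eval σ)
      (Polynomial.Chebyshev.T_mul_T (R := ℝ) ((2 ^ j : ℕ) : ℤ) ((2 ^ j : ℕ) : ℤ))
    simp only [sub_self, Polynomial.Chebyshev.T_zero, Polynomial.eval_mul,
      Polynomial.eval_add, Polynomial.eval_one, Polynomial.eval_ofNat] at h
    rw [hσk, hσk, h2, pow_two]
    linarith [h]
  have hσk1 : σk (2 ^ 0) = σ := by
    rw [hσk]
    norm_num [Polynomial.Chebyshev.T_one]
  have hgt : ∀ j : ℕ, 1 < σk (2 ^ j) := by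
    intro j
    induction j with
    | zero => rw [hσk1]; exact hσ1
    | succ n ih => rw [hdouble]; nlinarith
  -- key: ζ (j+1) is the Chebyshev coefficient
  have key : ∀ j : ℕ, ζ (j + 1) = 2 * (σk (2 ^ j)) ^ 2 / σk (2 ^ (j + 1)) := by
    intro j
    induction j with
    | zero =>
      rw [hζ1, hζ0, hdouble 0, hσk1, hσval]
      have h1 : (1 : ℝ) + 2 * (α * (2 / (α + β))) - (α * (2 / (α + β))) ^ 2
          = (α ^ 2 + 6 * α * β + β ^ 2) / (α + β) ^ 2 := by
        field_simp
        ring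
      have h2 : 2 * ((α + β) / (β - α)) ^ 2 - 1
          = (α ^ 2 + 6 * α * β + β ^ 2) / (β - α) ^ 2 := by
        field_simp
        ring
      rw [h1, h2]
      have hpos : (0:ℝ) < α ^ 2 + 6 * α * β + β ^ 2 := by nlinarith
      have h3 : (α ^ 2 + 6 * α * β + β ^ 2) ≠ 0 := ne_of_gt hpos
      field_simp
    | succ n ih =>
      have hv : 1 < σk (2 ^ (n + 1)) := hgt (n + 1)
      set v := σk (2 ^ (n + 1)) with hvdef
      have hv0 : v ≠ 0 := by linarith
      have h2u : 2 * (σk (2 ^ n)) ^ 2 = v + 1 := by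
        rw [hvdef, hdouble n]; ring
      have hz : ζ (n + 1) = (v + 1) / v := by rw [ih, h2u]
      have hD : 1 + 2 * ζ (n + 1) - (ζ (n + 1)) ^ 2 = (2 * v ^ 2 - 1) / v ^ 2 := by
        rw [hz]
        field_simp
        ring
      have hv2 : (0:ℝ) < 2 * v ^ 2 - 1 := by nlinarith
      rw [hζ (n + 1) (by omega), hD, hdouble (n + 1), ← hvdef]
      rw [div_div_eq_mul_div]
  -- main induction
  intro j
  induction j with
  | zero =>
    funext x
    rw [hr0, hp0, hζ0, hθ]
    rw [div_div_eq_mul_div]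
    norm_num
  | succ n ih =>
    funext x
    rw [hr, hp, key n, ih]
end
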